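/- Let μ be the Gauss measure on [0,1] and let a_k(x) denote the k-th continued fraction digit of x. If c > 0 is sufficiently small, then the set of x ∈ [0,1] for which there exists m₀ ∈ ℕ such that for all m ≥ m₀ one has max_{1≤k≤m} a_k(x) ≥ c·m/(log m)², has μ-measure one. -/

import Mathlib

open MeasureTheory Filter Set
open scoped ENNReal

/-- The Gauss map `x ↦ 1/x mod 1`. -/
noncomputable def gaussMap (x : ℝ) : ℝ := Int.fract x⁻¹

/-- The `k`-th continued fraction digit `a_k(x) = ⌊1 / G^{k-1}(x)⌋` (for `k ≥ 1`). -/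
noncomputable def cfDigit (k : ℕ) (x : ℝ) : ℤ := ⌊(gaussMap^[k - 1] x)⁻¹⌋

/-- The Gauss measure on `[0,1]`, with density `(1/log 2) · 1/(1+x)` with respect to
Lebesgue measure. -/
noncomputable def gaussMeasure : Measure ℝ :=
  (volume.restrict (Set.Icc (0 : ℝ) 1)).withDensity
    fun x => ENNReal.ofReal ((Real.log 2)⁻¹ * (1 + x)⁻¹)

namespace CFProof

lemma measurable_gaussMap : Measurable gaussMap := measurable_inv.fract

lemma measurable_cfDigit (k : ℕ) : Measurable (cfDigit k) :=
  ((measurable_gaussMap.iterate (k - 1)).inv).floor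

/-- Survivor set: all digits among the first `m` are at most `N`. -/
def D (N m : ℕ) : Set ℝ := {x | ∀ k, 1 ≤ k → k ≤ m → cfDigit k x ≤ (N : ℤ)}

lemma measurableSet_D (N m : ℕ) : MeasurableSet (D N m) := by
  have h : D N m = ⋂ (k : ℕ), ⋂ (_ : 1 ≤ k), ⋂ (_ : k ≤ m), cfDigit k ⁻¹' (Set.Iic (N : ℤ)) := by
    ext x; simp [D]
  rw [h]
  exact MeasurableSet.iInter fun k => MeasurableSet.iInter fun _ => MeasurableSet.iInter fun _ =>
    (measurable_cfDigit k) measurableSet_Iic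

/-- The density (up to the `1/log 2` constant) of the Gauss measure. -/
noncomputable def w : ℝ → ℝ≥0∞ := fun x => ENNReal.ofReal (1 + x)⁻¹

lemma measurable_w : Measurable w := (measurable_const.add measurable_id).inv.ennreal_ofReal

/-- Gauss-density mass of the rank-`m` survivor set. -/
noncomputable def P (N m : ℕ) : ℝ≥0∞ := ∫⁻ x in Ioo (0:ℝ) 1 ∩ D N m, w x

lemma cfDigit_succ {k : ℕ} (hk : 1 ≤ k) (x : ℝ) :
    cfDigit (k + 1) x = cfDigit k (gaussMap x) := by
  obtain ⟨n, rfl⟩ := Nat.exists_eq_add_of_le hk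
  show (⌊(gaussMap^[1 + n + 1 - 1] x)⁻¹⌋ : ℤ) = ⌊(gaussMap^[1 + n - 1] (gaussMap x))⁻¹⌋
  have h1 : 1 + n + 1 - 1 = n + 1 := by omega
  have h2 : 1 + n - 1 = n := by omega
  rw [h1, h2, Function.iterate_succ_apply]

lemma lintegral_image_eq_lintegral_abs_deriv_mul' {s : Set ℝ} {f f' : ℝ → ℝ}
    (hs : MeasurableSet s) (hf' : ∀ x ∈ s, HasDerivWithinAt f (f' x) s x) (hf : InjOn f s)
    (g : ℝ → ℝ≥0∞) :
    ∫⁻ x in f '' s, g x = ∫⁻ x in s, ENNReal.ofReal |f' x| * g (f x) := by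
  simpa only [ContinuousLinearMap.det_toSpanSingleton] using
    MeasureTheory.lintegral_image_eq_lintegral_abs_det_fderiv_mul volume hs
      (fun x hx => (hf' x hx).hasFDerivWithinAt) hf g

lemma lintegral_image_inv_add (j : ℕ) (hj : 1 ≤ j) {s : Set ℝ} (hs : MeasurableSet s)
    (hsub : s ⊆ Ioo (0:ℝ) 1) :
    ∫⁻ x in (fun t : ℝ => ((j:ℝ) + t)⁻¹) '' s, w x
      = ∫⁻ t in s, ENNReal.ofReal ((((j:ℝ) + t) * ((j:ℝ) + t + 1))⁻¹) := by
  have hj0 : (0:ℝ) < j := by exact_mod_cast hj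
  have hne : ∀ t ∈ s, (j:ℝ) + t ≠ 0 := by
    intro t ht; have := (hsub ht).1; positivity
  have hderiv : ∀ t ∈ s, HasDerivWithinAt (fun t : ℝ => ((j:ℝ) + t)⁻¹)
      (-1 / ((j:ℝ) + t) ^ 2) s t := by
    intro t ht
    have h1 : HasDerivAt (fun t : ℝ => (j:ℝ) + t) 1 t := (hasDerivAt_id t).const_add _
    exact (h1.inv (hne t ht)).hasDerivWithinAt
  have hinj : InjOn (fun t : ℝ => ((j:ℝ) + t)⁻¹) s := by
    intro a _ b _ hab
    have h := inv_injective hab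
    simpa using h
  rw [lintegral_image_eq_lintegral_abs_deriv_mul' hs hderiv hinj]
  refine setLIntegral_congr_fun hs (fun t ht => ?_)
  have ht0 : 0 < t := (hsub ht).1
  have hpos : (0:ℝ) < (j:ℝ) + t := by positivity
  have habs : |(-1 : ℝ) / ((j:ℝ) + t) ^ 2| = (((j:ℝ) + t) ^ 2)⁻¹ := by
    rw [abs_div, abs_neg, abs_one, abs_of_nonneg (sq_nonneg _), one_div]
  rw [habs, w, ← ENNReal.ofReal_mul (by positivity)]
  congr 1
  have h1 : (1 : ℝ) + ((j:ℝ) + t)⁻¹ ≠ 0 := by positivity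
  field_simp

lemma sum_telescope (N : ℕ) {t : ℝ} (ht : 0 < t) :
    ∑ j ∈ Finset.Icc 1 N, (((j:ℝ) + t) * ((j:ℝ) + t + 1))⁻¹
      = (1 + t)⁻¹ - ((N:ℝ) + 1 + t)⁻¹ := by
  induction N with
  | zero => simp
  | succ n ih =>
    rw [Finset.sum_Icc_succ_top (by omega : 1 ≤ n + 1), ih]
    have h1 : (0:ℝ) < (n:ℝ) + 1 + t := by positivity
    have h2 : (0:ℝ) < (n:ℝ) + 1 + t + 1 := by positivity
    have e1 : ((n:ℝ) + 1 + t) ≠ 0 := ne_of_gt h1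
    have e2 : ((n:ℝ) + 1 + t + 1) ≠ 0 := ne_of_gt h2
    push_cast
    field_simp
    ring

/-- The covering of the rank-`(m+1)` survivor set by branch images. -/
lemma cover (N m : ℕ) :
    Ioo (0:ℝ) 1 ∩ D N (m + 1) ⊆
      (⋃ j ∈ Finset.Icc 1 N, (fun t : ℝ => ((j:ℝ) + t)⁻¹) '' (Ioo (0:ℝ) 1 ∩ D N m))
        ∪ Set.range (fun n : ℕ => ((n:ℝ))⁻¹) := by
  rintro x ⟨⟨hx0, hx1⟩, hxD⟩
  have hxi1 : 1 < x⁻¹ := by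
    rw [one_lt_inv_iff₀]; exact ⟨hx0, hx1⟩
  set j : ℤ := ⌊x⁻¹⌋ with hj_def
  have hj1 : 1 ≤ j := by
    rw [hj_def, Int.le_floor]; exact_mod_cast hxi1.le
  have hd1 : cfDigit 1 x = j := by
    simp [cfDigit, hj_def]
  have hjN : j ≤ (N : ℤ) := by
    rw [← hd1]; exact hxD 1 le_rfl (by omega)
  set jn : ℕ := j.toNat with hjn_def
  have hjn : (jn : ℤ) = j := Int.toNat_of_nonneg (by omega)
  have hjnR : (jn : ℝ) = ((j : ℤ) : ℝ) := by exact_mod_cast congrArg (fun z : ℤ => (z : ℝ)) hjn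
  have hfl : ((j : ℤ) : ℝ) ≤ x⁻¹ := Int.floor_le _
  have hfu : x⁻¹ < ((j : ℤ) : ℝ) + 1 := Int.lt_floor_add_one _
  by_cases hbad : x⁻¹ = ((j : ℤ) : ℝ)
  · right
    refine ⟨jn, ?_⟩
    show ((jn:ℝ))⁻¹ = x
    rw [hjnR, ← hbad, inv_inv]
  · left
    have hfl' : ((j : ℤ) : ℝ) < x⁻¹ := lt_of_le_of_ne hfl (Ne.symm hbad)
    set t : ℝ := gaussMap x with ht_def
    have htx : t = x⁻¹ - ((j : ℤ) : ℝ) := rfl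
    have ht0 : 0 < t := by rw [htx]; linarith
    have ht1 : t < 1 := by rw [htx]; linarith
    have htD : t ∈ D N m := by
      intro k hk1 hkm
      rw [ht_def, ← cfDigit_succ hk1 x]
      exact hxD (k + 1) (by omega) (by omega)
    have hphit : ((jn:ℝ) + t)⁻¹ = x := by
      rw [hjnR, htx]
      have : ((j : ℤ) : ℝ) + (x⁻¹ - ((j : ℤ) : ℝ)) = x⁻¹ := by ring
      rw [this, inv_inv]
    refine mem_iUnion₂.2 ⟨jn, ?_, ⟨t, ⟨⟨ht0, ht1⟩, htD⟩, hphit⟩⟩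
    rw [Finset.mem_Icc]
    constructor
    · omega
    · exact_mod_cast hjn ▸ hjN

lemma lintegral_biUnion_finset_le (f : ℝ → ℝ≥0∞) (s : Finset ℕ) (t : ℕ → Set ℝ) :
    ∫⁻ x in ⋃ j ∈ s, t j, f x ≤ ∑ j ∈ s, ∫⁻ x in t j, f x := by
  classical
  induction s using Finset.induction with
  | empty => simp
  | insert a s' hj ih =>
    rw [Finset.set_biUnion_insert, Finset.sum_insert hj]
    exact (lintegral_union_le _ _ _).trans (by gcongr)

lemma P_succ_le (N m : ℕ) :
    P N (m + 1) ≤ ENNReal.ofReal (1 - ((N:ℝ) + 1)⁻¹) * P N m := by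
  classical
  have hs : MeasurableSet (Ioo (0:ℝ) 1 ∩ D N m) :=
    measurableSet_Ioo.inter (measurableSet_D N m)
  have hNinv : ((N:ℝ) + 1)⁻¹ ≤ 1 := by
    apply inv_le_one_of_one_le₀; push_cast; linarith [Nat.cast_nonneg (α := ℝ) N]
  have hmeas_term : ∀ j : ℕ, Measurable fun t : ℝ =>
      ENNReal.ofReal ((((j:ℝ) + t) * ((j:ℝ) + t + 1))⁻¹) := by
    intro j
    apply Measurable.ennreal_ofReal
    apply Measurable.inv
    exact ((measurable_const.add measurable_id).mul ((measurable_const.add measurable_id).add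
      measurable_const))
  calc P N (m + 1)
      ≤ ∫⁻ x in (⋃ j ∈ Finset.Icc 1 N, (fun t : ℝ => ((j:ℝ) + t)⁻¹) ''
          (Ioo (0:ℝ) 1 ∩ D N m)) ∪ Set.range (fun n : ℕ => ((n:ℝ))⁻¹), w x :=
        lintegral_mono_set (cover N m)
    _ ≤ (∫⁻ x in ⋃ j ∈ Finset.Icc 1 N, (fun t : ℝ => ((j:ℝ) + t)⁻¹) ''
          (Ioo (0:ℝ) 1 ∩ D N m), w x)
        + ∫⁻ x in Set.range (fun n : ℕ => ((n:ℝ))⁻¹), w x := lintegral_union_le _ _ _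
    _ = ∫⁻ x in ⋃ j ∈ Finset.Icc 1 N, (fun t : ℝ => ((j:ℝ) + t)⁻¹) ''
          (Ioo (0:ℝ) 1 ∩ D N m), w x := by
        rw [setLIntegral_measure_zero _ _ ((Set.countable_range _).measure_zero _), add_zero]
    _ ≤ ∑ j ∈ Finset.Icc 1 N, ∫⁻ x in (fun t : ℝ => ((j:ℝ) + t)⁻¹) ''
          (Ioo (0:ℝ) 1 ∩ D N m), w x := lintegral_biUnion_finset_le _ _ _
    _ = ∑ j ∈ Finset.Icc 1 N, ∫⁻ t in Ioo (0:ℝ) 1 ∩ D N m,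
          ENNReal.ofReal ((((j:ℝ) + t) * ((j:ℝ) + t + 1))⁻¹) := by
        refine Finset.sum_congr rfl fun j hj => ?_
        exact lintegral_image_inv_add j (Finset.mem_Icc.1 hj).1 hs inter_subset_left
    _ = ∫⁻ t in Ioo (0:ℝ) 1 ∩ D N m, ∑ j ∈ Finset.Icc 1 N,
          ENNReal.ofReal ((((j:ℝ) + t) * ((j:ℝ) + t + 1))⁻¹) :=
        (lintegral_finset_sum _ fun j _ => hmeas_term j).symm
    _ ≤ ∫⁻ t in Ioo (0:ℝ) 1 ∩ D N m, ENNReal.ofReal (1 - ((N:ℝ) + 1)⁻¹) * w t := by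
        refine setLIntegral_mono (measurable_const.mul measurable_w) fun t ht => ?_
        have ht0 : 0 < t := ht.1.1
        have ht1 : t < 1 := ht.1.2
        have hterm_nonneg : ∀ j ∈ Finset.Icc 1 N,
            0 ≤ (((j:ℝ) + t) * ((j:ℝ) + t + 1))⁻¹ := by
          intro j hj
          have : (0:ℝ) < ((j:ℝ) + t) * ((j:ℝ) + t + 1) := by positivity
          positivity
        rw [← ENNReal.ofReal_sum_of_nonneg hterm_nonneg, sum_telescope N ht0, w,
          ← ENNReal.ofReal_mul (by linarith)]
        apply ENNReal.ofReal_le_ofReal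
        have hNt : (0:ℝ) < (N:ℝ) + 1 + t := by positivity
        have hN1 : (0:ℝ) < (N:ℝ) + 1 := by positivity
        have key : ((N:ℝ) + 1)⁻¹ * (1 + t)⁻¹ ≤ ((N:ℝ) + 1 + t)⁻¹ := by
          rw [← mul_inv]
          apply inv_anti₀ hNt
          nlinarith [Nat.cast_nonneg (α := ℝ) N]
        nlinarith [key, inv_nonneg.2 (le_of_lt (show (0:ℝ) < 1 + t by linarith))]
    _ = ENNReal.ofReal (1 - ((N:ℝ) + 1)⁻¹) * P N m := by
        rw [P, lintegral_const_mul' _ _ ENNReal.ofReal_ne_top]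

lemma theta_nonneg (N : ℕ) : 0 ≤ 1 - ((N:ℝ) + 1)⁻¹ := by
  have : ((N:ℝ) + 1)⁻¹ ≤ 1 := by
    apply inv_le_one_of_one_le₀; linarith [Nat.cast_nonneg (α := ℝ) N]
  linarith

lemma P_le (N m : ℕ) : P N m ≤ ENNReal.ofReal ((1 - ((N:ℝ) + 1)⁻¹) ^ m) := by
  induction m with
  | zero =>
    simp only [pow_zero, ENNReal.ofReal_one]
    calc P N 0 ≤ ∫⁻ _ in Ioo (0:ℝ) 1 ∩ D N 0, 1 := by
          refine setLIntegral_mono measurable_const fun x hx => ?_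
          rw [w]
          exact ENNReal.ofReal_le_one.2 (inv_le_one_of_one_le₀ (by linarith [hx.1.1]))
      _ = volume (Ioo (0:ℝ) 1 ∩ D N 0) := setLIntegral_one _
      _ ≤ volume (Ioo (0:ℝ) 1) := measure_mono inter_subset_left
      _ = 1 := by simp [Real.volume_Ioo]
  | succ m ih =>
    calc P N (m + 1) ≤ ENNReal.ofReal (1 - ((N:ℝ) + 1)⁻¹) * P N m := P_succ_le N m
      _ ≤ ENNReal.ofReal (1 - ((N:ℝ) + 1)⁻¹) * ENNReal.ofReal ((1 - ((N:ℝ) + 1)⁻¹) ^ m) := by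
          gcongr
      _ = ENNReal.ofReal ((1 - ((N:ℝ) + 1)⁻¹) ^ (m + 1)) := by
          rw [← ENNReal.ofReal_mul (theta_nonneg N)]
          congr 1
          ring

lemma gaussMeasure_apply {S : Set ℝ} (hS : MeasurableSet S) :
    gaussMeasure S = ∫⁻ x in S ∩ Icc (0:ℝ) 1, ENNReal.ofReal ((Real.log 2)⁻¹) * w x := by
  have hlog : (0:ℝ) ≤ (Real.log 2)⁻¹ := inv_nonneg.2 (Real.log_nonneg one_le_two)
  rw [gaussMeasure, withDensity_apply _ hS, Measure.restrict_restrict hS]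
  refine setLIntegral_congr_fun (hS.inter measurableSet_Icc) (fun x _ => ?_)
  rw [w, ← ENNReal.ofReal_mul hlog]

lemma gaussMeasure_le_of_subset {S : Set ℝ} (hS : MeasurableSet S) (N m : ℕ)
    (h : S ∩ Ioo 0 1 ⊆ D N m) :
    gaussMeasure S ≤ ENNReal.ofReal ((Real.log 2)⁻¹ * (1 - ((N:ℝ) + 1)⁻¹) ^ m) := by
  have hlog : (0:ℝ) ≤ (Real.log 2)⁻¹ := inv_nonneg.2 (Real.log_nonneg one_le_two)
  rw [gaussMeasure_apply hS]
  have h1 : S ∩ Icc (0:ℝ) 1 ⊆ (Ioo (0:ℝ) 1 ∩ D N m) ∪ ({0, 1} : Set ℝ) := by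
    rintro x ⟨hxS, hx0, hx1⟩
    rcases eq_or_lt_of_le hx0 with h0 | h0
    · right; exact Or.inl h0.symm
    rcases eq_or_lt_of_le hx1 with h1 | h1
    · right; exact Or.inr h1
    · exact Or.inl ⟨⟨h0, h1⟩, h ⟨hxS, h0, h1⟩⟩
  calc ∫⁻ x in S ∩ Icc (0:ℝ) 1, ENNReal.ofReal ((Real.log 2)⁻¹) * w x
      ≤ ∫⁻ x in (Ioo (0:ℝ) 1 ∩ D N m) ∪ ({0, 1} : Set ℝ),
          ENNReal.ofReal ((Real.log 2)⁻¹) * w x := lintegral_mono_set h1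
    _ ≤ (∫⁻ x in Ioo (0:ℝ) 1 ∩ D N m, ENNReal.ofReal ((Real.log 2)⁻¹) * w x)
        + ∫⁻ x in ({0, 1} : Set ℝ), ENNReal.ofReal ((Real.log 2)⁻¹) * w x :=
        lintegral_union_le _ _ _
    _ = ∫⁻ x in Ioo (0:ℝ) 1 ∩ D N m, ENNReal.ofReal ((Real.log 2)⁻¹) * w x := by
        rw [setLIntegral_measure_zero _ _ (((Set.finite_singleton (1:ℝ)).insert 0).measure_zero _),
          add_zero]
    _ = ENNReal.ofReal ((Real.log 2)⁻¹) * P N m := by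
        rw [P, lintegral_const_mul' _ _ ENNReal.ofReal_ne_top]
    _ ≤ ENNReal.ofReal ((Real.log 2)⁻¹) * ENNReal.ofReal ((1 - ((N:ℝ) + 1)⁻¹) ^ m) := by
        gcongr
        exact P_le N m
    _ = ENNReal.ofReal ((Real.log 2)⁻¹ * (1 - ((N:ℝ) + 1)⁻¹) ^ m) :=
        (ENNReal.ofReal_mul hlog).symm

lemma gaussMeasure_univ : gaussMeasure univ = 1 := by
  have h2 : (0:ℝ) < Real.log 2 := Real.log_pos one_lt_two
  rw [gaussMeasure_apply MeasurableSet.univ, univ_inter,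
    lintegral_const_mul' _ _ ENNReal.ofReal_ne_top]
  have hInt : IntegrableOn (fun x : ℝ => (1 + x)⁻¹) (Icc 0 1) := by
    apply ContinuousOn.integrableOn_compact isCompact_Icc
    apply ContinuousOn.inv₀ (Continuous.continuousOn (by continuity))
    intro x hx
    have := hx.1
    positivity
  have hnn : 0 ≤ᶠ[ae (volume.restrict (Icc (0:ℝ) 1))] fun x : ℝ => (1 + x)⁻¹ := by
    refine (ae_restrict_iff' measurableSet_Icc).2 (ae_of_all _ fun x hx => ?_)
    have := hx.1
    positivity
  have hIoc : ∫ x in (0:ℝ)..1, (1 + x)⁻¹ = Real.log 2 := by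
    have h1 : ∫ x in (0:ℝ)..1, (1 + x)⁻¹
        = ∫ x in ((1:ℝ)+0)..((1:ℝ)+1), x⁻¹ :=
      intervalIntegral.integral_comp_add_left (fun y : ℝ => y⁻¹) 1
    rw [h1, show ((1:ℝ)+0) = 1 by norm_num, show ((1:ℝ)+1) = 2 by norm_num,
      integral_inv (by rw [Set.uIcc_of_le (by norm_num : (1:ℝ) ≤ 2)]; norm_num)]
    norm_num
  have hW : ∫⁻ x in Icc (0:ℝ) 1, w x = ENNReal.ofReal (Real.log 2) := by
    rw [show (fun x : ℝ => w x) = fun x : ℝ => ENNReal.ofReal ((1 + x)⁻¹) from rfl]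
    rw [← MeasureTheory.ofReal_integral_eq_lintegral_ofReal hInt hnn]
    congr 1
    rw [MeasureTheory.integral_Icc_eq_integral_Ioc, ← intervalIntegral.integral_of_le zero_le_one]
    exact hIoc
  rw [hW, ← ENNReal.ofReal_mul (inv_nonneg.2 h2.le), inv_mul_cancel₀ (ne_of_gt h2),
    ENNReal.ofReal_one]

/-- The bad set at time `m`: all of the first `m` digits are below the threshold. -/
def Cset (c : ℝ) (m : ℕ) : Set ℝ :=
  {x | ∀ k, 1 ≤ k → k ≤ m → (cfDigit k x : ℝ) < c * m / Real.log m ^ 2}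

lemma measurableSet_Cset (c : ℝ) (m : ℕ) : MeasurableSet (Cset c m) := by
  have h : Cset c m = ⋂ (k : ℕ), ⋂ (_ : 1 ≤ k), ⋂ (_ : k ≤ m),
      cfDigit k ⁻¹' {n : ℤ | (n : ℝ) < c * m / Real.log m ^ 2} := by
    ext x; simp [Cset]
  rw [h]
  exact MeasurableSet.iInter fun k => MeasurableSet.iInter fun _ => MeasurableSet.iInter fun _ =>
    (measurable_cfDigit k) ((Set.to_countable _).measurableSet)

/-- The digit cutoff at time `m`. -/
noncomputable def Nc (c : ℝ) (m : ℕ) : ℕ := ⌈c * m / Real.log m ^ 2⌉₊ + 1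

/-- The measure bound for the bad set at time `m`. -/
noncomputable def rr (c : ℝ) (m : ℕ) : ℝ :=
  (Real.log 2)⁻¹ * (1 - ((Nc c m : ℝ) + 1)⁻¹) ^ m

lemma rr_nonneg (c : ℝ) (m : ℕ) : 0 ≤ rr c m := by
  have h1 := theta_nonneg (Nc c m)
  have h2 : (0:ℝ) ≤ (Real.log 2)⁻¹ := inv_nonneg.2 (Real.log_nonneg one_le_two)
  rw [rr]
  positivity

lemma T_nonneg {c : ℝ} (hc : 0 < c) (m : ℕ) : 0 ≤ c * m / Real.log m ^ 2 := by positivity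

lemma Cset_subset {c : ℝ} (hc : 0 < c) (m : ℕ) : Cset c m ∩ Ioo 0 1 ⊆ D (Nc c m) m := by
  rintro x ⟨hxC, -⟩ k hk1 hkm
  have h1 : (cfDigit k x : ℝ) < c * m / Real.log m ^ 2 := hxC k hk1 hkm
  have h2 : c * m / Real.log m ^ 2 ≤ (⌈c * m / Real.log m ^ 2⌉₊ : ℝ) := Nat.le_ceil _
  have h3 : (cfDigit k x : ℝ) < ((Nc c m : ℕ) : ℝ) := by
    rw [Nc]; push_cast; linarith
  have h4 : cfDigit k x < ((Nc c m : ℕ) : ℤ) := by exact_mod_cast h3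
  omega

lemma gauss_Cset_le {c : ℝ} (hc : 0 < c) (m : ℕ) :
    gaussMeasure (Cset c m) ≤ ENNReal.ofReal (rr c m) :=
  gaussMeasure_le_of_subset (measurableSet_Cset c m) (Nc c m) m (Cset_subset hc m)

lemma key_bound {c : ℝ} (hc : 0 < c) {m : ℕ}
    (hm576 : (576:ℝ) ≤ (m:ℝ)) (hexp : Real.exp (4 * c) ≤ (m:ℝ)) :
    rr c m ≤ 2 * (1 / (m : ℝ) ^ 2) := by
  have hm0 : (0:ℝ) < m := by linarith
  have hlog4c : 4 * c ≤ Real.log m := (Real.le_log_iff_exp_le hm0).2 hexp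
  have hlogpos : 0 < Real.log m := lt_of_lt_of_le (by positivity) hlog4c
  set L : ℝ := Real.log m with hL_def
  set T : ℝ := c * m / L ^ 2 with hT_def
  have hL2 : (0:ℝ) < L ^ 2 := by positivity
  have hT0 : (0:ℝ) ≤ T := by rw [hT_def]; positivity
  have hTL2 : T * L ^ 2 = c * m := by rw [hT_def]; field_simp
  have hceil : (⌈T⌉₊ : ℝ) < T + 1 := Nat.ceil_lt_add_one hT0
  have hNcT : (Nc c m : ℝ) = (⌈T⌉₊ : ℝ) + 1 := by rw [Nc]; push_cast; rfl
  have hNpos : (0:ℝ) < (Nc c m : ℝ) + 1 := by positivity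
  -- Step A : 2 L (N+1) ≤ m
  have hsqrt : Real.sqrt m * Real.sqrt m = (m:ℝ) := Real.mul_self_sqrt hm0.le
  have hsqrt24 : (24:ℝ) ≤ Real.sqrt m := by
    have h576 : Real.sqrt 576 ≤ Real.sqrt m := Real.sqrt_le_sqrt hm576
    have h24 : Real.sqrt 576 = 24 := by
      rw [show (576:ℝ) = 24 ^ 2 by norm_num, Real.sqrt_sq (by norm_num : (0:ℝ) ≤ 24)]
    linarith
  have hLsqrt : L ≤ 2 * Real.sqrt m := by
    have h1 : Real.log (Real.sqrt m) ≤ Real.sqrt m - 1 :=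
      Real.log_le_sub_one_of_pos (by positivity)
    have h2 : Real.log (Real.sqrt m) = L / 2 := Real.log_sqrt hm0.le
    rw [h2] at h1
    linarith
  have h6L : 6 * L ≤ (m:ℝ) / 2 := by nlinarith
  have h2LT : 2 * L * T ≤ (m:ℝ) / 2 := by
    nlinarith [mul_nonneg hm0.le (sub_nonneg.2 hlog4c), hTL2, hlogpos]
  have hstepA : 2 * L * ((Nc c m : ℝ) + 1) ≤ (m:ℝ) := by
    have hN3 : ((Nc c m : ℝ) + 1) ≤ T + 3 := by rw [hNcT]; linarith
    calc 2 * L * ((Nc c m : ℝ) + 1) ≤ 2 * L * (T + 3) := by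
          apply mul_le_mul_of_nonneg_left hN3 (by positivity)
      _ = 2 * L * T + 6 * L := by ring
      _ ≤ (m:ℝ) / 2 + (m:ℝ) / 2 := add_le_add h2LT h6L
      _ = (m:ℝ) := by ring
  -- Step B : θ^m ≤ 1/m²
  have hθ0 : 0 ≤ 1 - ((Nc c m : ℝ) + 1)⁻¹ := theta_nonneg (Nc c m)
  have hθexp : 1 - ((Nc c m : ℝ) + 1)⁻¹ ≤ Real.exp (-((Nc c m : ℝ) + 1)⁻¹) := by
    linarith [Real.add_one_le_exp (-((Nc c m : ℝ) + 1)⁻¹)]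
  have hpow : (1 - ((Nc c m : ℝ) + 1)⁻¹) ^ m ≤ Real.exp (-(((Nc c m : ℝ) + 1)⁻¹) * m) := by
    calc (1 - ((Nc c m : ℝ) + 1)⁻¹) ^ m ≤ (Real.exp (-((Nc c m : ℝ) + 1)⁻¹)) ^ m :=
          pow_le_pow_left₀ hθ0 hθexp m
      _ = Real.exp (-(((Nc c m : ℝ) + 1)⁻¹) * m) := by
          rw [← Real.exp_nat_mul]; congr 1; ring
  have hmono : -(((Nc c m : ℝ) + 1)⁻¹) * m ≤ -(2 * L) := by
    have h1 : 2 * L ≤ (m:ℝ) / ((Nc c m : ℝ) + 1) := (le_div_iff₀ hNpos).2 hstepA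
    have h2 : (m:ℝ) / ((Nc c m : ℝ) + 1) = ((Nc c m : ℝ) + 1)⁻¹ * m := by
      rw [div_eq_mul_inv]; ring
    rw [h2] at h1
    linarith
  have hexp2 : Real.exp (-(2 * L)) = 1 / (m:ℝ) ^ 2 := by
    have h3 : 2 * L = Real.log ((m:ℝ) ^ 2) := by rw [Real.log_pow]; push_cast; ring
    rw [h3, Real.exp_neg, Real.exp_log (by positivity), one_div]
  have hfinal : (1 - ((Nc c m : ℝ) + 1)⁻¹) ^ m ≤ 1 / (m:ℝ) ^ 2 := by
    calc (1 - ((Nc c m : ℝ) + 1)⁻¹) ^ m ≤ Real.exp (-(((Nc c m : ℝ) + 1)⁻¹) * m) := hpow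
      _ ≤ Real.exp (-(2 * L)) := Real.exp_le_exp.2 hmono
      _ = 1 / (m:ℝ) ^ 2 := hexp2
  have hlog2 : (1:ℝ) / 2 ≤ Real.log 2 := by nlinarith [Real.log_two_gt_d9]
  have hlog2inv : (Real.log 2)⁻¹ ≤ 2 := by
    have h5 := inv_anti₀ (by norm_num : (0:ℝ) < 1 / 2) hlog2
    norm_num at h5
    linarith
  rw [rr]
  exact mul_le_mul hlog2inv hfinal (pow_nonneg hθ0 m) (by norm_num)

lemma summable_rr {c : ℝ} (hc : 0 < c) : Summable (rr c) := by
  set M : ℕ := max 576 (⌈Real.exp (4 * c)⌉₊ + 1) with hM_def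
  have hbase : Summable (fun n : ℕ => 2 * (1 / (n : ℝ) ^ 2)) :=
    (Real.summable_one_div_nat_pow.2 one_lt_two).mul_left 2
  have hg : Summable (fun i : ℕ => 2 * (1 / ((i + M : ℕ) : ℝ) ^ 2)) :=
    (summable_nat_add_iff (f := fun n : ℕ => 2 * (1 / (n : ℝ) ^ 2)) M).2 hbase
  have hshift : Summable (fun i : ℕ => rr c (i + M)) := by
    refine Summable.of_nonneg_of_le (fun i => rr_nonneg _ _) (fun i => ?_) hg
    have hm : M ≤ i + M := Nat.le_add_left M i
    have hm576 : (576:ℝ) ≤ ((i + M : ℕ) : ℝ) := by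
      have : (576:ℕ) ≤ i + M := le_trans (le_max_left _ _) hm
      exact_mod_cast this
    have hexp : Real.exp (4 * c) ≤ ((i + M : ℕ) : ℝ) := by
      have h1 : (⌈Real.exp (4 * c)⌉₊ + 1 : ℕ) ≤ i + M := le_trans (le_max_right _ _) hm
      have h2 : (⌈Real.exp (4 * c)⌉₊ : ℝ) ≤ ((i + M : ℕ) : ℝ) := by
        exact_mod_cast Nat.le_of_succ_le h1
      exact le_trans (Nat.le_ceil _) h2
    exact key_bound hc hm576 hexp
  exact (summable_nat_add_iff (f := rr c) M).1 hshift

end CFProof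

open CFProof in
/-- If `c > 0` is sufficiently small, the set of `x` whose maximal continued fraction
digit among the first `m` digits is eventually always at least `c·m/(log m)²` has
Gauss measure one. -/
theorem cf_max_digit_eah_one :
    ∃ c₀ : ℝ, 0 < c₀ ∧ ∀ c : ℝ, 0 < c → c ≤ c₀ →
      gaussMeasure {x : ℝ | ∃ m₀ : ℕ, ∀ m : ℕ, m₀ ≤ m →
        ∃ k : ℕ, 1 ≤ k ∧ k ≤ m ∧ c * m / (Real.log m) ^ 2 ≤ (cfDigit k x : ℝ)} = 1 := by
  refine ⟨1, one_pos, fun c hc _ => ?_⟩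
  have htsum : (∑' m, gaussMeasure (Cset c m)) ≠ ⊤ := by
    have h1 : (∑' m, gaussMeasure (Cset c m)) ≤ ∑' m, ENNReal.ofReal (rr c m) :=
      ENNReal.tsum_le_tsum (fun m => gauss_Cset_le hc m)
    have h2 : (∑' m, ENNReal.ofReal (rr c m)) = ENNReal.ofReal (∑' m, rr c m) :=
      (ENNReal.ofReal_tsum_of_nonneg (rr_nonneg c) (summable_rr hc)).symm
    rw [h2] at h1
    exact ne_top_of_le_ne_top ENNReal.ofReal_ne_top h1
  set A := ⋂ n : ℕ, ⋃ m : ℕ, ⋃ (_ : n ≤ m), Cset c m with hA_def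
  have hAmeas : MeasurableSet A :=
    MeasurableSet.iInter fun n => MeasurableSet.iUnion fun m => MeasurableSet.iUnion fun _ =>
      measurableSet_Cset c m
  have hA0 : gaussMeasure A = 0 := by
    have hle : ∀ n : ℕ, gaussMeasure A ≤ ∑' i : ℕ, gaussMeasure (Cset c (i + n)) := by
      intro n
      have hsubA : A ⊆ ⋃ i : ℕ, Cset c (i + n) := by
        intro x hx
        have h1 := mem_iInter.1 hx n
        obtain ⟨m, hm⟩ := mem_iUnion.1 h1
        obtain ⟨hnm, hxm⟩ := mem_iUnion.1 hm
        exact mem_iUnion.2 ⟨m - n, by rwa [Nat.sub_add_cancel hnm]⟩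
      exact le_trans (measure_mono hsubA) (measure_iUnion_le _)
    have htendsto := ENNReal.tendsto_sum_nat_add (fun m => gaussMeasure (Cset c m)) htsum
    have h2 := ge_of_tendsto' htendsto hle
    exact le_antisymm h2 zero_le
  have hset : {x : ℝ | ∃ m₀ : ℕ, ∀ m : ℕ, m₀ ≤ m →
      ∃ k : ℕ, 1 ≤ k ∧ k ≤ m ∧ c * m / (Real.log m) ^ 2 ≤ (cfDigit k x : ℝ)} = Aᶜ := by
    ext x
    simp only [mem_setOf_eq, mem_compl_iff]
    constructor
    · rintro ⟨m₀, hm₀⟩ hxA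
      have h1 := mem_iInter.1 hxA m₀
      obtain ⟨m, hm'⟩ := mem_iUnion.1 h1
      obtain ⟨hnm, hxm⟩ := mem_iUnion.1 hm'
      obtain ⟨k, hk1, hkm, hk⟩ := hm₀ m hnm
      exact absurd hk (not_le.2 (hxm k hk1 hkm))
    · intro hxA
      by_contra hcon
      push_neg at hcon
      apply hxA
      refine mem_iInter.2 fun n => ?_
      obtain ⟨m, hnm, hm⟩ := hcon n
      exact mem_iUnion.2 ⟨m, mem_iUnion.2 ⟨hnm, hm⟩⟩
  rw [hset, measure_compl hAmeas (by rw [hA0]; exact ENNReal.zero_ne_top), hA0,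
    gaussMeasure_univ, tsub_zero]
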